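/- For all nonnegative integers r, s, n and i ∈ {1,2}, H_i(r,s,n) = G_i(r,s,n), where H_i(r,s,n) counts partitions of n with exactly r even parts and s odd parts, with distinct odd parts, smallest even part ≥ 2(r+s+i−1), and smallest odd part ≥ 2i−1; and G_i(r,s,n) counts partitions of n with exactly r even parts and s odd parts, all parts ≥ 2i−1, with no two parts equal or consecutive and no two even parts equal or consecutive. -/

import Mathlib

/-- Odd parts are pairwise distinct. -/
def distinctOddParts (m : Multiset ℕ) : Prop := ∀ a, Odd a → m.count a ≤ 1

/-- Every even part is at least `k` (vacuous if no even part). -/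
def minEvenGe (m : Multiset ℕ) (k : ℕ) : Prop := ∀ a ∈ m, Even a → k ≤ a

/-- Every odd part is at least `k` (vacuous if no odd part). -/
def minOddGe (m : Multiset ℕ) (k : ℕ) : Prop := ∀ a ∈ m, Odd a → k ≤ a

/-- No two parts are equal or consecutive, and no two even parts are equal or
consecutive even numbers: parts pairwise differ by at least 2, even parts by at least 4. -/
def gapCond (m : Multiset ℕ) : Prop :=
  (∀ a, m.count a ≤ 1) ∧ (∀ a ∈ m, ∀ b ∈ m, a < b → a + 2 ≤ b) ∧
  (∀ a ∈ m, ∀ b ∈ m, Even a → Even b → a < b → a + 4 ≤ b)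

/-- Number of even parts. -/
def evenCount (m : Multiset ℕ) : ℕ := (m.filter (fun a => Even a)).card

/-- Number of odd parts. -/
def oddCount (m : Multiset ℕ) : ℕ := (m.filter (fun a => Odd a)).card

noncomputable def Hcount (i r s n : ℕ) : ℕ :=
  {p : n.Partition | evenCount p.parts = r ∧ oddCount p.parts = s ∧
    distinctOddParts p.parts ∧ minEvenGe p.parts (2 * (r + s + i - 1)) ∧
    minOddGe p.parts (2 * i - 1)}.ncard

noncomputable def Gcount (i r s n : ℕ) : ℕ :=
  {p : n.Partition | evenCount p.parts = r ∧ oddCount p.parts = s ∧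
    (∀ a ∈ p.parts, 2 * i - 1 ≤ a) ∧ gapCond p.parts}.ncard


lemma sum_map_add_const (d : ℕ) (M : Multiset ℕ) :
    (M.map (· + d)).sum = M.sum + d * Multiset.card M := by
  induction M using Multiset.induction with
  | empty => simp
  | cons a s ih => simp [ih]; ring

lemma count_map_add (d a : ℕ) (M : Multiset ℕ) :
    (M.map (· + d)).count a = if d ≤ a then M.count (a - d) else 0 := by
  split_ifs with h
  · have h3 : a - d + d = a := by omega
    rw [← h3, Nat.add_sub_cancel]
    exact Multiset.count_map_eq_count' _ _ (fun x y hxy => by simpa using hxy) _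
  · rw [Multiset.count_eq_zero]
    intro hmem
    rcases Multiset.mem_map.1 hmem with ⟨y, _, hy⟩
    omega

lemma mem_map_add (d a : ℕ) (M : Multiset ℕ) :
    a ∈ M.map (· + d) ↔ d ≤ a ∧ a - d ∈ M := by
  rw [Multiset.mem_map]
  constructor
  · rintro ⟨y, hy, rfl⟩
    constructor
    · omega
    · simpa using hy
  · rintro ⟨h1, h2⟩
    exact ⟨a - d, h2, by omega⟩

lemma evenCount_add (A B : Multiset ℕ) : evenCount (A + B) = evenCount A + evenCount B := by
  simp [evenCount, Multiset.filter_add]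

lemma oddCount_add (A B : Multiset ℕ) : oddCount (A + B) = oddCount A + oddCount B := by
  simp [oddCount, Multiset.filter_add]

lemma evenCount_cons (a : ℕ) (M : Multiset ℕ) :
    evenCount (a ::ₘ M) = evenCount M + (if Even a then 1 else 0) := by
  simp only [evenCount, Multiset.filter_cons]
  split_ifs <;> simp [add_comm]

lemma oddCount_cons (a : ℕ) (M : Multiset ℕ) :
    oddCount (a ::ₘ M) = oddCount M + (if Odd a then 1 else 0) := by
  simp only [oddCount, Multiset.filter_cons]
  split_ifs <;> simp [add_comm]

lemma evenCount_map_add (d : ℕ) (hd : d % 2 = 0) (M : Multiset ℕ) :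
    evenCount (M.map (· + d)) = evenCount M := by
  unfold evenCount
  rw [Multiset.filter_map, Multiset.card_map]
  congr 1
  apply Multiset.filter_congr
  intro x _
  simp only [Function.comp]
  rw [Nat.even_iff, Nat.even_iff]
  omega

lemma oddCount_map_add (d : ℕ) (hd : d % 2 = 0) (M : Multiset ℕ) :
    oddCount (M.map (· + d)) = oddCount M := by
  unfold oddCount
  rw [Multiset.filter_map, Multiset.card_map]
  congr 1
  apply Multiset.filter_congr
  intro x _
  simp only [Function.comp]
  rw [Nat.odd_iff, Nat.odd_iff]
  omega

lemma card_eq_even_add_odd (M : Multiset ℕ) :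
    Multiset.card M = evenCount M + oddCount M := by
  unfold evenCount oddCount
  have h : M.filter (fun a => Odd a) = M.filter (fun a => ¬ Even a) :=
    Multiset.filter_congr (fun x _ => (Nat.not_even_iff_odd).symm)
  rw [h]
  conv_lhs => rw [← Multiset.filter_add_not (fun a => Even a) M]
  rw [Multiset.card_add]

lemma one_le_evenCount {M : Multiset ℕ} {a : ℕ} (ha : a ∈ M) (h : Even a) :
    1 ≤ evenCount M := by
  have : a ∈ M.filter (fun a => Even a) := Multiset.mem_filter.2 ⟨ha, h⟩
  have := Multiset.card_pos_iff_exists_mem.2 ⟨a, this⟩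
  unfold evenCount; omega

lemma one_le_oddCount {M : Multiset ℕ} {a : ℕ} (ha : a ∈ M) (h : Odd a) :
    1 ≤ oddCount M := by
  have : a ∈ M.filter (fun a => Odd a) := Multiset.mem_filter.2 ⟨ha, h⟩
  have := Multiset.card_pos_iff_exists_mem.2 ⟨a, this⟩
  unfold oddCount; omega

lemma map_sub_map_add {L : Multiset ℕ} {d : ℕ} (h : ∀ b ∈ L, d ≤ b) :
    (L.map (· - d)).map (· + d) = L := by
  rw [Multiset.map_map]
  calc L.map ((· + d) ∘ (· - d)) = L.map id := by
        apply Multiset.map_congr rfl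
        intro x hx
        have := h x hx
        simp only [Function.comp, id]
        omega
  _ = L := Multiset.map_id L

/-- core bijection lemma -/
lemma ncard_shift (d : ℕ) (e : Multiset ℕ) (P Q : Multiset ℕ → Prop) (m n : ℕ)
    (he : ∀ x ∈ e, 0 < x)
    (hfwd : ∀ M : Multiset ℕ, (∀ x ∈ M, 0 < x) → M.sum = m → P M →
        (M.map (· + d) + e).sum = n ∧ Q (M.map (· + d) + e))
    (hbwd : ∀ N : Multiset ℕ, (∀ x ∈ N, 0 < x) → N.sum = n → Q N →
        ∃ M : Multiset ℕ, (∀ x ∈ M, 0 < x) ∧ M.sum = m ∧ P M ∧ N = M.map (· + d) + e) :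
    {p : n.Partition | Q p.parts}.ncard = {p : m.Partition | P p.parts}.ncard := by
  classical
  rw [← Nat.card_coe_set_eq, ← Nat.card_coe_set_eq]
  have hpos : ∀ (M : Multiset ℕ), (∀ x ∈ M, 0 < x) → ∀ x ∈ M.map (· + d) + e, 0 < x := by
    intro M hM x hx
    rcases Multiset.mem_add.1 hx with h | h
    · rcases Multiset.mem_map.1 h with ⟨y, hy, rfl⟩
      have := hM y hy; omega
    · exact he x h
  refine Nat.card_congr (Equiv.symm (Equiv.ofBijective
    (fun p => ⟨⟨p.1.parts.map (· + d) + e, fun {x} hx => hpos _ (fun y hy => p.1.parts_pos hy) x hx,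
       (hfwd _ (fun x hx => p.1.parts_pos hx) p.1.parts_sum p.2).1⟩,
       (hfwd _ (fun x hx => p.1.parts_pos hx) p.1.parts_sum p.2).2⟩) ⟨?_, ?_⟩))
  · rintro ⟨p, hp⟩ ⟨q, hq⟩ hpq
    have h1 := congrArg (fun x => (x.1 : Nat.Partition n).parts) hpq
    simp only at h1
    have h2 : p.parts.map (· + d) = q.parts.map (· + d) := add_right_cancel h1
    have h3 : p.parts = q.parts :=
      Multiset.map_injective (fun x y hxy => by simpa using hxy) h2
    exact Subtype.ext (Nat.Partition.ext h3)
  · rintro ⟨q, hq⟩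
    obtain ⟨M, hMpos, hMsum, hMP, hMeq⟩ := hbwd q.parts (fun x hx => q.parts_pos hx) q.parts_sum hq
    refine ⟨⟨⟨M, fun {x} hx => hMpos x hx, hMsum⟩, hMP⟩, ?_⟩
    exact Subtype.ext (Nat.Partition.ext hMeq.symm)

/-- split into three parts -/
lemma ncard_split3 {n : ℕ} (S : Set (Nat.Partition n)) (c : ℕ) :
    S.ncard = {p ∈ S | 1 ∈ p.parts}.ncard + {p ∈ S | 1 ∉ p.parts ∧ c ∈ p.parts}.ncard
      + {p ∈ S | 1 ∉ p.parts ∧ c ∉ p.parts}.ncard := by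
  classical
  rw [← Set.ncard_union_eq (by
        rw [Set.disjoint_left]; rintro p ⟨_, h1⟩ ⟨_, h2, _⟩; exact h2 h1)
      (Set.toFinite _) (Set.toFinite _),
    ← Set.ncard_union_eq (by
        rw [Set.disjoint_left]; rintro p (⟨_, h1⟩ | ⟨_, _, h1⟩) ⟨_, h2, h3⟩
        · exact h2 h1
        · exact h3 h1)
      (Set.toFinite _) (Set.toFinite _)]
  congr 1
  ext p
  simp only [Set.mem_union, Set.mem_setOf_eq, Set.mem_sep_iff]
  by_cases h1 : 1 ∈ p.parts <;> by_cases h2 : c ∈ p.parts <;> tauto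

lemma sum_lb (N : Multiset ℕ) (c d : ℕ) (hc : c ∈ N) (h : ∀ b ∈ N.erase c, d ≤ b) :
    c + d * (Multiset.card N - 1) ≤ N.sum := by
  conv_rhs => rw [← Multiset.cons_erase hc]
  rw [Multiset.sum_cons]
  have h1 := Multiset.card_nsmul_le_sum h
  have h2 : Multiset.card (N.erase c) = Multiset.card N - 1 := by
    rw [Multiset.card_erase_of_mem hc]; rfl
  simp only [smul_eq_mul] at h1
  rw [h2] at h1
  have h3 : d * (Multiset.card N - 1) ≤ (N.erase c).sum := by
    rw [mul_comm]; exact h1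
  exact Nat.add_le_add_left h3 c

def HS (r s : ℕ) (M : Multiset ℕ) : Prop :=
  evenCount M = r ∧ oddCount M = s ∧ distinctOddParts M ∧ minEvenGe M (2*(r+s)) ∧ minOddGe M 1
def GS (r s : ℕ) (M : Multiset ℕ) : Prop :=
  evenCount M = r ∧ oddCount M = s ∧ (∀ a ∈ M, 1 ≤ a) ∧ gapCond M
def HS2 (r s : ℕ) (M : Multiset ℕ) : Prop :=
  evenCount M = r ∧ oddCount M = s ∧ distinctOddParts M ∧ minEvenGe M (2*(r+s+1)) ∧ minOddGe M 3
def GS2 (r s : ℕ) (M : Multiset ℕ) : Prop :=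
  evenCount M = r ∧ oddCount M = s ∧ (∀ a ∈ M, 3 ≤ a) ∧ gapCond M

lemma count_combo (d c a : ℕ) (M : Multiset ℕ) :
    (M.map (· + d) + {c}).count a
      = (if d ≤ a then M.count (a-d) else 0) + (if a = c then 1 else 0) := by
  rw [Multiset.count_add, count_map_add, Multiset.count_singleton]

lemma mem_combo (d c a : ℕ) (M : Multiset ℕ) :
    a ∈ M.map (· + d) + {c} ↔ (d ≤ a ∧ a - d ∈ M) ∨ a = c := by
  rw [Multiset.mem_add, mem_map_add, Multiset.mem_singleton]

lemma evenCount_singleton (c : ℕ) : evenCount {c} = if Even c then 1 else 0 := by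
  simp only [evenCount, Multiset.filter_singleton]
  split_ifs <;> simp

lemma oddCount_singleton (c : ℕ) : oddCount {c} = if Odd c then 1 else 0 := by
  simp only [oddCount, Multiset.filter_singleton]
  split_ifs <;> simp

lemma count_rel {M L : Multiset ℕ} {d : ℕ} (hML : M.map (· + d) = L) (a : ℕ) :
    M.count a = L.count (a + d) := by
  rw [← hML]
  exact (Multiset.count_map_eq_count' _ _ (fun x y hxy => by simpa using hxy) a).symm

lemma mem_rel {M L : Multiset ℕ} {d : ℕ} (hML : M.map (· + d) = L) {a : ℕ} (ha : a ∈ M) :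
    a + d ∈ L := by
  rw [← hML]; exact Multiset.mem_map_of_mem _ ha

lemma L_H1 (r s m : ℕ) :
    {p : (m + (2*(r+s)+1)).Partition | HS r (s+1) p.parts ∧ 1 ∈ p.parts}.ncard
      = {p : m.Partition | HS r s p.parts}.ncard := by
  refine ncard_shift 2 {1} (HS r s) (fun M => HS r (s+1) M ∧ 1 ∈ M) m _ ?_ ?_ ?_
  · intro x hx; rw [Multiset.mem_singleton] at hx; omega
  · rintro M hpos hsum ⟨he, ho, hd, hme, _⟩
    have hcard : Multiset.card M = r + s := by rw [card_eq_even_add_odd, he, ho]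
    refine ⟨?_, ⟨?_, ?_, ?_, ?_, ?_⟩, ?_⟩
    · rw [Multiset.sum_add, sum_map_add_const, hcard, hsum]
      simp only [Multiset.sum_singleton]
      omega
    · rw [evenCount_add, evenCount_map_add 2 rfl, he, evenCount_singleton]
      norm_num
    · rw [oddCount_add, oddCount_map_add 2 rfl, ho, oddCount_singleton]
      norm_num
    · intro a ha
      have ha2 := Nat.odd_iff.1 ha
      rw [count_combo]
      by_cases h2 : 2 ≤ a
      · have h3 : Odd (a - 2) := Nat.odd_iff.2 (by omega)
        have h4 := hd _ h3
        have h5 : a ≠ 1 := by omega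
        simp only [h2, if_true, h5, if_false]
        omega
      · have h1 : a = 1 := by omega
        simp [h1]
    · intro a haN haE
      rcases (mem_combo 2 1 a M).1 haN with ⟨h2, hmem⟩ | rfl
      · have hE2 : Even (a - 2) := by rw [Nat.even_iff] at haE ⊢; omega
        have := hme _ hmem hE2
        omega
      · rw [Nat.even_iff] at haE; omega
    · intro a haN _
      rcases (mem_combo 2 1 a M).1 haN with ⟨h2, _⟩ | rfl <;> omega
    · exact Multiset.mem_add.2 (Or.inr (Multiset.mem_singleton_self 1))
  · rintro N hpos hsum ⟨⟨he, ho, hd, hme, hmo⟩, h1N⟩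
    have h1L : (1:ℕ) ∉ N.erase 1 := by
      intro h
      have h1 := hd 1 ⟨0, by norm_num⟩
      have h2 := Multiset.count_erase_self 1 N
      have h3 := Multiset.count_pos.2 h
      omega
    have hge : ∀ b ∈ N.erase 1, 3 ≤ b := by
      intro b hb
      have hbN : b ∈ N := Multiset.mem_of_mem_erase hb
      have hb1 : b ≠ 1 := by rintro rfl; exact h1L hb
      rcases Nat.even_or_odd b with hbe | hbo
      · have h2 := hme b hbN hbe
        have h3 : 1 ≤ evenCount N := one_le_evenCount hbN hbe
        omega
      · have := hpos b hbN
        have := Nat.odd_iff.1 hbo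
        omega
    have hML : ((N.erase 1).map (· - 2)).map (· + 2) = N.erase 1 :=
      map_sub_map_add (fun b hb => by have := hge b hb; omega)
    have hNL : N = 1 ::ₘ N.erase 1 := (Multiset.cons_erase h1N).symm
    have hNM : N = ((N.erase 1).map (· - 2)).map (· + 2) + {1} := by
      rw [hML, add_comm, Multiset.singleton_add]; exact hNL
    have hcN : Multiset.card N = r + (s+1) := by rw [card_eq_even_add_odd, he, ho]
    have hcM : Multiset.card ((N.erase 1).map (· - 2)) = r + s := by
      rw [Multiset.card_map, Multiset.card_erase_of_mem h1N, hcN]; rfl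
    have hEL : evenCount N = evenCount (N.erase 1) := by
      have h := evenCount_cons 1 (N.erase 1)
      rw [← hNL] at h
      simpa using h
    have hOL : oddCount N = oddCount (N.erase 1) + 1 := by
      have h := oddCount_cons 1 (N.erase 1)
      rw [← hNL] at h
      simpa using h
    refine ⟨(N.erase 1).map (· - 2), ?_, ?_, ⟨?_, ?_, ?_, ?_, ?_⟩, hNM⟩
    · intro x hx
      rcases Multiset.mem_map.1 hx with ⟨b, hb, rfl⟩
      have := hge b hb; omega
    · have hsum2 : N.sum = ((N.erase 1).map (· - 2)).sum + 2*(r+s) + 1 := by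
        conv_lhs => rw [hNM]
        rw [Multiset.sum_add, sum_map_add_const, hcM]
        simp only [Multiset.sum_singleton]
      omega
    · rw [← evenCount_map_add 2 rfl, hML]
      omega
    · rw [← oddCount_map_add 2 rfl, hML]
      omega
    · intro a ha
      rw [count_rel hML a]
      refine le_trans (Multiset.count_le_of_le _ (Multiset.erase_le 1 N)) (hd (a+2) ?_)
      rw [Nat.odd_iff] at ha ⊢
      omega
    · intro a haM haE
      have h1 : a + 2 ∈ N.erase 1 := mem_rel hML haM
      have h2 : a + 2 ∈ N := Multiset.mem_of_mem_erase h1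
      have h3 : Even (a + 2) := by rw [Nat.even_iff] at haE ⊢; omega
      have := hme _ h2 h3
      omega
    · intro a haM _
      rcases Multiset.mem_map.1 haM with ⟨b, hb, rfl⟩
      have := hge b hb; omega

lemma L_H2 (r s m : ℕ) :
    {p : (m + (4*(r+s)+2)).Partition | HS (r+1) s p.parts ∧ 1 ∉ p.parts ∧ 2*(r+1+s) ∈ p.parts}.ncard
      = {p : m.Partition | HS r s p.parts}.ncard := by
  have hKe : Even (2*(r+1+s)) := ⟨r+1+s, by ring⟩
  have hKo : ¬ Odd (2*(r+1+s)) := by rw [Nat.odd_iff]; omega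
  refine ncard_shift 2 {2*(r+1+s)} (HS r s)
    (fun M => HS (r+1) s M ∧ 1 ∉ M ∧ 2*(r+1+s) ∈ M) m _ ?_ ?_ ?_
  · intro x hx; rw [Multiset.mem_singleton] at hx; omega
  · rintro M hpos hsum ⟨he, ho, hd, hme, _⟩
    have hcard : Multiset.card M = r + s := by rw [card_eq_even_add_odd, he, ho]
    refine ⟨?_, ⟨?_, ?_, ?_, ?_, ?_⟩, ?_, ?_⟩
    · rw [Multiset.sum_add, sum_map_add_const, hcard, hsum]
      simp only [Multiset.sum_singleton]
      omega
    · rw [evenCount_add, evenCount_map_add 2 rfl, he, evenCount_singleton, if_pos hKe]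
    · rw [oddCount_add, oddCount_map_add 2 rfl, ho, oddCount_singleton, if_neg hKo]
      omega
    · intro a ha
      have ha2 := Nat.odd_iff.1 ha
      rw [count_combo]
      have hK : a ≠ 2*(r+1+s) := by omega
      rw [if_neg hK]
      by_cases h2 : 2 ≤ a
      · have h3 : Odd (a-2) := Nat.odd_iff.2 (by omega)
        have h4 := hd _ h3
        rw [if_pos h2]; omega
      · rw [if_neg h2]; omega
    · intro a haN haE
      rcases (mem_combo 2 _ a M).1 haN with ⟨h2, hmem⟩ | h3
      · have hE2 : Even (a-2) := by rw [Nat.even_iff] at haE ⊢; omega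
        have := hme _ hmem hE2
        omega
      · omega
    · intro a haN _
      rcases (mem_combo 2 _ a M).1 haN with ⟨h2, _⟩ | h3 <;> omega
    · intro h
      rcases (mem_combo 2 _ 1 M).1 h with ⟨h2, _⟩ | h3 <;> omega
    · exact Multiset.mem_add.2 (Or.inr (Multiset.mem_singleton_self _))
  · rintro N hpos hsum ⟨⟨he, ho, hd, hme, hmo⟩, h1N, hKN⟩
    have hNL : N = 2*(r+1+s) ::ₘ N.erase (2*(r+1+s)) := (Multiset.cons_erase hKN).symm
    have hEL : evenCount N = evenCount (N.erase (2*(r+1+s))) + 1 := by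
      have h := evenCount_cons (2*(r+1+s)) (N.erase (2*(r+1+s)))
      rw [← hNL, if_pos hKe] at h
      exact h
    have hOL : oddCount N = oddCount (N.erase (2*(r+1+s))) := by
      have h := oddCount_cons (2*(r+1+s)) (N.erase (2*(r+1+s)))
      rw [← hNL, if_neg hKo] at h
      simpa using h
    have hge : ∀ b ∈ N.erase (2*(r+1+s)), 3 ≤ b := by
      intro b hb
      have hbN : b ∈ N := Multiset.mem_of_mem_erase hb
      have hb1 : b ≠ 1 := by rintro rfl; exact h1N hbN
      rcases Nat.even_or_odd b with hbe | hbo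
      · have h2 := hme b hbN hbe
        have h3 : 1 ≤ evenCount (N.erase (2*(r+1+s))) := one_le_evenCount hb hbe
        omega
      · have := hpos b hbN
        have := Nat.odd_iff.1 hbo
        omega
    have hML : ((N.erase (2*(r+1+s))).map (· - 2)).map (· + 2) = N.erase (2*(r+1+s)) :=
      map_sub_map_add (fun b hb => by have := hge b hb; omega)
    have hNM : N = ((N.erase (2*(r+1+s))).map (· - 2)).map (· + 2) + {2*(r+1+s)} := by
      rw [hML, add_comm, Multiset.singleton_add]; exact hNL
    have hcN : Multiset.card N = (r+1) + s := by rw [card_eq_even_add_odd, he, ho]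
    have hcM : Multiset.card ((N.erase (2*(r+1+s))).map (· - 2)) = r + s := by
      rw [Multiset.card_map, Multiset.card_erase_of_mem hKN, hcN, Nat.pred_eq_sub_one]
      omega
    refine ⟨(N.erase (2*(r+1+s))).map (· - 2), ?_, ?_, ⟨?_, ?_, ?_, ?_, ?_⟩, hNM⟩
    · intro x hx
      rcases Multiset.mem_map.1 hx with ⟨b, hb, rfl⟩
      have := hge b hb; omega
    · have hsum2 : N.sum = ((N.erase (2*(r+1+s))).map (· - 2)).sum + 2*(r+s) + 2*(r+1+s) := by
        conv_lhs => rw [hNM]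
        rw [Multiset.sum_add, sum_map_add_const, hcM]
        simp only [Multiset.sum_singleton]
      omega
    · rw [← evenCount_map_add 2 rfl, hML]
      omega
    · rw [← oddCount_map_add 2 rfl, hML]
      omega
    · intro a ha
      rw [count_rel hML a]
      refine le_trans (Multiset.count_le_of_le _ (Multiset.erase_le _ N)) (hd (a+2) ?_)
      rw [Nat.odd_iff] at ha ⊢
      omega
    · intro a haM haE
      have h1 : a + 2 ∈ N.erase (2*(r+1+s)) := mem_rel hML haM
      have h2 : a + 2 ∈ N := Multiset.mem_of_mem_erase h1
      have h3 : Even (a + 2) := by rw [Nat.even_iff] at haE ⊢; omega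
      have := hme _ h2 h3
      omega
    · intro a haM _
      rcases Multiset.mem_map.1 haM with ⟨b, hb, rfl⟩
      have := hge b hb; omega

lemma L_H3 (r s m : ℕ) :
    {p : (m + 2*(r+s)).Partition | HS r s p.parts ∧ 1 ∉ p.parts ∧ 2*(r+s) ∉ p.parts}.ncard
      = {p : m.Partition | HS r s p.parts}.ncard := by
  refine ncard_shift 2 0 (HS r s)
    (fun M => HS r s M ∧ 1 ∉ M ∧ 2*(r+s) ∉ M) m _ ?_ ?_ ?_
  · intro x hx; exact absurd hx (Multiset.notMem_zero x)
  · rintro M hpos hsum ⟨he, ho, hd, hme, _⟩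
    have hcard : Multiset.card M = r + s := by rw [card_eq_even_add_odd, he, ho]
    rw [add_zero]
    refine ⟨?_, ⟨?_, ?_, ?_, ?_, ?_⟩, ?_, ?_⟩
    · rw [sum_map_add_const, hcard, hsum]
    · rw [evenCount_map_add 2 rfl, he]
    · rw [oddCount_map_add 2 rfl, ho]
    · intro a ha
      have ha2 := Nat.odd_iff.1 ha
      rw [count_map_add]
      by_cases h2 : 2 ≤ a
      · have h3 : Odd (a-2) := Nat.odd_iff.2 (by omega)
        have h4 := hd _ h3
        rw [if_pos h2]; omega
      · rw [if_neg h2]; omega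
    · intro a haN haE
      rcases (mem_map_add 2 a M).1 haN with ⟨h2, hmem⟩
      have hE2 : Even (a-2) := by rw [Nat.even_iff] at haE ⊢; omega
      have := hme _ hmem hE2
      omega
    · intro a haN _
      rcases (mem_map_add 2 a M).1 haN with ⟨h2, _⟩
      omega
    · intro h
      rcases (mem_map_add 2 1 M).1 h with ⟨h2, _⟩
      omega
    · intro h
      rcases (mem_map_add 2 (2*(r+s)) M).1 h with ⟨h2, hmem⟩
      have hE2 : Even (2*(r+s)-2) := by rw [Nat.even_iff]; omega
      have := hme _ hmem hE2
      omega
  · rintro N hpos hsum ⟨⟨he, ho, hd, hme, hmo⟩, h1N, hKN⟩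
    have hge : ∀ b ∈ N, 3 ≤ b := by
      intro b hbN
      have hb1 : b ≠ 1 := by rintro rfl; exact h1N hbN
      have hbK : b ≠ 2*(r+s) := by rintro rfl; exact hKN hbN
      rcases Nat.even_or_odd b with hbe | hbo
      · have h2 := hme b hbN hbe
        have h3 : 1 ≤ evenCount N := one_le_evenCount hbN hbe
        rw [Nat.even_iff] at hbe
        omega
      · have := hpos b hbN
        have := Nat.odd_iff.1 hbo
        omega
    have hML : (N.map (· - 2)).map (· + 2) = N :=
      map_sub_map_add (fun b hb => by have := hge b hb; omega)
    have hNM : N = (N.map (· - 2)).map (· + 2) + 0 := by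
      rw [add_zero]; exact hML.symm
    have hcN : Multiset.card N = r + s := by rw [card_eq_even_add_odd, he, ho]
    have hcM : Multiset.card (N.map (· - 2)) = r + s := by rw [Multiset.card_map, hcN]
    refine ⟨N.map (· - 2), ?_, ?_, ⟨?_, ?_, ?_, ?_, ?_⟩, hNM⟩
    · intro x hx
      rcases Multiset.mem_map.1 hx with ⟨b, hb, rfl⟩
      have := hge b hb; omega
    · have hsum2 : N.sum = (N.map (· - 2)).sum + 2*(r+s) := by
        conv_lhs => rw [← hML]
        rw [sum_map_add_const, hcM]
      omega
    · rw [← evenCount_map_add 2 rfl, hML]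
      omega
    · rw [← oddCount_map_add 2 rfl, hML]
      omega
    · intro a ha
      rw [count_rel hML a]
      refine hd (a+2) ?_
      rw [Nat.odd_iff] at ha ⊢
      omega
    · intro a haM haE
      have h2 : a + 2 ∈ N := mem_rel hML haM
      have h3 : Even (a + 2) := by rw [Nat.even_iff] at haE ⊢; omega
      have h4 := hme _ h2 h3
      have h5 : a + 2 ≠ 2*(r+s) := by rintro h; rw [← h] at hKN; exact hKN h2
      rw [Nat.even_iff] at h3
      omega
    · intro a haM _
      rcases Multiset.mem_map.1 haM with ⟨b, hb, rfl⟩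
      have := hge b hb; omega

lemma L_Hshift (r s m : ℕ) :
    {p : (m + 2*(r+s)).Partition | HS2 r s p.parts}.ncard
      = {p : m.Partition | HS r s p.parts}.ncard := by
  refine ncard_shift 2 0 (HS r s) (HS2 r s) m _ ?_ ?_ ?_
  · intro x hx; exact absurd hx (Multiset.notMem_zero x)
  · rintro M hpos hsum ⟨he, ho, hd, hme, _⟩
    have hcard : Multiset.card M = r + s := by rw [card_eq_even_add_odd, he, ho]
    rw [add_zero]
    refine ⟨?_, ?_, ?_, ?_, ?_, ?_⟩
    · rw [sum_map_add_const, hcard, hsum]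
    · rw [evenCount_map_add 2 rfl, he]
    · rw [oddCount_map_add 2 rfl, ho]
    · intro a ha
      have ha2 := Nat.odd_iff.1 ha
      rw [count_map_add]
      by_cases h2 : 2 ≤ a
      · have h3 : Odd (a-2) := Nat.odd_iff.2 (by omega)
        have h4 := hd _ h3
        rw [if_pos h2]; omega
      · rw [if_neg h2]; omega
    · intro a haN haE
      rcases (mem_map_add 2 a M).1 haN with ⟨h2, hmem⟩
      have hE2 : Even (a-2) := by rw [Nat.even_iff] at haE ⊢; omega
      have := hme _ hmem hE2
      omega
    · intro a haN ha
      rcases (mem_map_add 2 a M).1 haN with ⟨h2, hmem⟩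
      have := hpos _ hmem
      omega
  · rintro N hpos hsum ⟨he, ho, hd, hme, hmo⟩
    have hge : ∀ b ∈ N, 3 ≤ b := by
      intro b hbN
      rcases Nat.even_or_odd b with hbe | hbo
      · have h2 := hme b hbN hbe
        have h3 : 1 ≤ evenCount N := one_le_evenCount hbN hbe
        omega
      · exact hmo b hbN hbo
    have hML : (N.map (· - 2)).map (· + 2) = N :=
      map_sub_map_add (fun b hb => by have := hge b hb; omega)
    have hNM : N = (N.map (· - 2)).map (· + 2) + 0 := by
      rw [add_zero]; exact hML.symm
    have hcN : Multiset.card N = r + s := by rw [card_eq_even_add_odd, he, ho]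
    have hcM : Multiset.card (N.map (· - 2)) = r + s := by rw [Multiset.card_map, hcN]
    refine ⟨N.map (· - 2), ?_, ?_, ⟨?_, ?_, ?_, ?_, ?_⟩, hNM⟩
    · intro x hx
      rcases Multiset.mem_map.1 hx with ⟨b, hb, rfl⟩
      have := hge b hb; omega
    · have hsum2 : N.sum = (N.map (· - 2)).sum + 2*(r+s) := by
        conv_lhs => rw [← hML]
        rw [sum_map_add_const, hcM]
      omega
    · rw [← evenCount_map_add 2 rfl, hML]
      omega
    · rw [← oddCount_map_add 2 rfl, hML]
      omega
    · intro a ha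
      rw [count_rel hML a]
      refine hd (a+2) ?_
      rw [Nat.odd_iff] at ha ⊢
      omega
    · intro a haM haE
      have h2 : a + 2 ∈ N := mem_rel hML haM
      have h3 : Even (a + 2) := by rw [Nat.even_iff] at haE ⊢; omega
      have h4 := hme _ h2 h3
      omega
    · intro a haM ha
      have h2 : a + 2 ∈ N := mem_rel hML haM
      have h3 : Odd (a + 2) := by rw [Nat.odd_iff] at ha ⊢; omega
      have := hmo _ h2 h3
      omega

lemma L_G1 (r s m : ℕ) :
    {p : (m + (2*(r+s)+1)).Partition | GS r (s+1) p.parts ∧ 1 ∈ p.parts}.ncard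
      = {p : m.Partition | GS r s p.parts}.ncard := by
  refine ncard_shift 2 {1} (GS r s) (fun M => GS r (s+1) M ∧ 1 ∈ M) m _ ?_ ?_ ?_
  · intro x hx; rw [Multiset.mem_singleton] at hx; omega
  · rintro M hpos hsum ⟨he, ho, h1, hg1, hg2, hg3⟩
    have hcard : Multiset.card M = r + s := by rw [card_eq_even_add_odd, he, ho]
    refine ⟨?_, ⟨?_, ?_, ?_, ?_, ?_, ?_⟩, ?_⟩
    · rw [Multiset.sum_add, sum_map_add_const, hcard, hsum]
      simp only [Multiset.sum_singleton]
      omega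
    · rw [evenCount_add, evenCount_map_add 2 rfl, he, evenCount_singleton]
      norm_num
    · rw [oddCount_add, oddCount_map_add 2 rfl, ho, oddCount_singleton]
      norm_num
    · intro a haN
      rcases (mem_combo 2 1 a M).1 haN with ⟨h2, _⟩ | h3 <;> omega
    · intro a
      rw [count_combo]
      by_cases h2 : 2 ≤ a
      · have h4 := hg1 (a-2)
        have h5 : a ≠ 1 := by omega
        rw [if_pos h2, if_neg h5]; omega
      · rw [if_neg h2]
        split_ifs <;> omega
    · intro a haN b hbN hab
      rcases (mem_combo 2 1 a M).1 haN with ⟨ha2, haM⟩ | ha1 <;>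
        rcases (mem_combo 2 1 b M).1 hbN with ⟨hb2, hbM⟩ | hb1
      · have := hg2 _ haM _ hbM (by omega)
        omega
      · omega
      · have := h1 _ hbM
        omega
      · omega
    · intro a haN b hbN hae hbe hab
      rcases (mem_combo 2 1 a M).1 haN with ⟨ha2, haM⟩ | ha1 <;>
        rcases (mem_combo 2 1 b M).1 hbN with ⟨hb2, hbM⟩ | hb1
      · have hae2 : Even (a-2) := by rw [Nat.even_iff] at hae ⊢; omega
        have hbe2 : Even (b-2) := by rw [Nat.even_iff] at hbe ⊢; omega
        have := hg3 _ haM _ hbM hae2 hbe2 (by omega)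
        omega
      · rw [Nat.even_iff] at hbe; omega
      · rw [Nat.even_iff] at hae; omega
      · omega
    · exact Multiset.mem_add.2 (Or.inr (Multiset.mem_singleton_self 1))
  · rintro N hpos hsum ⟨⟨he, ho, h1, hg1, hg2, hg3⟩, h1N⟩
    have h1L : (1:ℕ) ∉ N.erase 1 := by
      intro h
      have ha := hg1 1
      have hb := Multiset.count_erase_self 1 N
      have hc := Multiset.count_pos.2 h
      omega
    have hge : ∀ b ∈ N.erase 1, 3 ≤ b := by
      intro b hb
      have hbN : b ∈ N := Multiset.mem_of_mem_erase hb
      have hb1 : b ≠ 1 := by rintro rfl; exact h1L hb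
      have := h1 b hbN
      have := hg2 1 h1N b hbN (by omega)
      omega
    have hML : ((N.erase 1).map (· - 2)).map (· + 2) = N.erase 1 :=
      map_sub_map_add (fun b hb => by have := hge b hb; omega)
    have hNL : N = 1 ::ₘ N.erase 1 := (Multiset.cons_erase h1N).symm
    have hNM : N = ((N.erase 1).map (· - 2)).map (· + 2) + {1} := by
      rw [hML, add_comm, Multiset.singleton_add]; exact hNL
    have hcN : Multiset.card N = r + (s+1) := by rw [card_eq_even_add_odd, he, ho]
    have hcM : Multiset.card ((N.erase 1).map (· - 2)) = r + s := by
      rw [Multiset.card_map, Multiset.card_erase_of_mem h1N, hcN]; rfl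
    have hEL : evenCount N = evenCount (N.erase 1) := by
      have h := evenCount_cons 1 (N.erase 1)
      rw [← hNL] at h
      simpa using h
    have hOL : oddCount N = oddCount (N.erase 1) + 1 := by
      have h := oddCount_cons 1 (N.erase 1)
      rw [← hNL] at h
      simpa using h
    have hmemN : ∀ a ∈ (N.erase 1).map (· - 2), a + 2 ∈ N := fun a haM =>
      Multiset.mem_of_mem_erase (mem_rel hML haM)
    refine ⟨(N.erase 1).map (· - 2), ?_, ?_, ⟨?_, ?_, ?_, ?_, ?_, ?_⟩, hNM⟩
    · intro x hx
      rcases Multiset.mem_map.1 hx with ⟨b, hb, rfl⟩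
      have := hge b hb; omega
    · have hsum2 : N.sum = ((N.erase 1).map (· - 2)).sum + 2*(r+s) + 1 := by
        conv_lhs => rw [hNM]
        rw [Multiset.sum_add, sum_map_add_const, hcM]
        simp only [Multiset.sum_singleton]
      omega
    · rw [← evenCount_map_add 2 rfl, hML]
      omega
    · rw [← oddCount_map_add 2 rfl, hML]
      omega
    · intro a haM
      rcases Multiset.mem_map.1 haM with ⟨b, hb, rfl⟩
      have := hge b hb; omega
    · intro a
      rw [count_rel hML a]
      exact le_trans (Multiset.count_le_of_le _ (Multiset.erase_le 1 N)) (hg1 (a+2))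
    · intro a haM b hbM hab
      have := hg2 _ (hmemN a haM) _ (hmemN b hbM) (by omega)
      omega
    · intro a haM b hbM hae hbe hab
      have hae2 : Even (a+2) := by rw [Nat.even_iff] at hae ⊢; omega
      have hbe2 : Even (b+2) := by rw [Nat.even_iff] at hbe ⊢; omega
      have := hg3 _ (hmemN a haM) _ (hmemN b hbM) hae2 hbe2 (by omega)
      omega

lemma L_G2 (r s m : ℕ) :
    {p : (m + (4*(r+s)+2)).Partition | GS (r+1) s p.parts ∧ 1 ∉ p.parts ∧ 2 ∈ p.parts}.ncard
      = {p : m.Partition | GS r s p.parts}.ncard := by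
  have h2e : Even 2 := ⟨1, by norm_num⟩
  have h2o : ¬ Odd 2 := by rw [Nat.odd_iff]; omega
  refine ncard_shift 4 {2} (GS r s) (fun M => GS (r+1) s M ∧ 1 ∉ M ∧ 2 ∈ M) m _ ?_ ?_ ?_
  · intro x hx; rw [Multiset.mem_singleton] at hx; omega
  · rintro M hpos hsum ⟨he, ho, h1, hg1, hg2, hg3⟩
    have hcard : Multiset.card M = r + s := by rw [card_eq_even_add_odd, he, ho]
    refine ⟨?_, ⟨?_, ?_, ?_, ?_, ?_, ?_⟩, ?_, ?_⟩
    · rw [Multiset.sum_add, sum_map_add_const, hcard, hsum]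
      simp only [Multiset.sum_singleton]
      omega
    · rw [evenCount_add, evenCount_map_add 4 rfl, he, evenCount_singleton, if_pos h2e]
    · rw [oddCount_add, oddCount_map_add 4 rfl, ho, oddCount_singleton, if_neg h2o]
      omega
    · intro a haN
      rcases (mem_combo 4 2 a M).1 haN with ⟨h2, _⟩ | h3 <;> omega
    · intro a
      rw [count_combo]
      by_cases h2 : 4 ≤ a
      · have h4 := hg1 (a-4)
        have h5 : a ≠ 2 := by omega
        rw [if_pos h2, if_neg h5]; omega
      · rw [if_neg h2]
        split_ifs <;> omega
    · intro a haN b hbN hab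
      rcases (mem_combo 4 2 a M).1 haN with ⟨ha2, haM⟩ | ha1 <;>
        rcases (mem_combo 4 2 b M).1 hbN with ⟨hb2, hbM⟩ | hb1
      · have h3 := h1 _ haM
        have := hg2 _ haM _ hbM (by omega)
        omega
      · have := h1 _ haM
        omega
      · have := h1 _ hbM
        omega
      · omega
    · intro a haN b hbN hae hbe hab
      rcases (mem_combo 4 2 a M).1 haN with ⟨ha2, haM⟩ | ha1 <;>
        rcases (mem_combo 4 2 b M).1 hbN with ⟨hb2, hbM⟩ | hb1
      · have hae2 : Even (a-4) := by rw [Nat.even_iff] at hae ⊢; omega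
        have hbe2 : Even (b-4) := by rw [Nat.even_iff] at hbe ⊢; omega
        have := hg3 _ haM _ hbM hae2 hbe2 (by omega)
        omega
      · have := h1 _ haM
        omega
      · have hbe2 : Even (b-4) := by rw [Nat.even_iff] at hbe ⊢; omega
        have hb1 := h1 _ hbM
        rw [Nat.even_iff] at hbe2
        omega
      · omega
    · intro h
      rcases (mem_combo 4 2 1 M).1 h with ⟨h2, _⟩ | h3 <;> omega
    · exact Multiset.mem_add.2 (Or.inr (Multiset.mem_singleton_self 2))
  · rintro N hpos hsum ⟨⟨he, ho, h1, hg1, hg2, hg3⟩, h1N, h2N⟩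
    have h2L : (2:ℕ) ∉ N.erase 2 := by
      intro h
      have ha := hg1 2
      have hb := Multiset.count_erase_self 2 N
      have hc := Multiset.count_pos.2 h
      omega
    have hge : ∀ b ∈ N.erase 2, 5 ≤ b := by
      intro b hb
      have hbN : b ∈ N := Multiset.mem_of_mem_erase hb
      have hb2 : b ≠ 2 := by rintro rfl; exact h2L hb
      have hb1 : b ≠ 1 := by rintro rfl; exact h1N hbN
      have hp := hpos b hbN
      have h4 := hg2 2 h2N b hbN (by omega)
      rcases Nat.even_or_odd b with hbe | hbo
      · have := hg3 2 h2N b hbN h2e hbe (by omega)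
        omega
      · rw [Nat.odd_iff] at hbo
        omega
    have hML : ((N.erase 2).map (· - 4)).map (· + 4) = N.erase 2 :=
      map_sub_map_add (fun b hb => by have := hge b hb; omega)
    have hNL : N = 2 ::ₘ N.erase 2 := (Multiset.cons_erase h2N).symm
    have hNM : N = ((N.erase 2).map (· - 4)).map (· + 4) + {2} := by
      rw [hML, add_comm, Multiset.singleton_add]; exact hNL
    have hcN : Multiset.card N = (r+1) + s := by rw [card_eq_even_add_odd, he, ho]
    have hcM : Multiset.card ((N.erase 2).map (· - 4)) = r + s := by
      rw [Multiset.card_map, Multiset.card_erase_of_mem h2N, hcN, Nat.pred_eq_sub_one]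
      omega
    have hEL : evenCount N = evenCount (N.erase 2) + 1 := by
      have h := evenCount_cons 2 (N.erase 2)
      rw [← hNL, if_pos h2e] at h
      exact h
    have hOL : oddCount N = oddCount (N.erase 2) := by
      have h := oddCount_cons 2 (N.erase 2)
      rw [← hNL, if_neg h2o] at h
      simpa using h
    have hmemN : ∀ a ∈ (N.erase 2).map (· - 4), a + 4 ∈ N := fun a haM =>
      Multiset.mem_of_mem_erase (mem_rel hML haM)
    refine ⟨(N.erase 2).map (· - 4), ?_, ?_, ⟨?_, ?_, ?_, ?_, ?_, ?_⟩, hNM⟩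
    · intro x hx
      rcases Multiset.mem_map.1 hx with ⟨b, hb, rfl⟩
      have := hge b hb; omega
    · have hsum2 : N.sum = ((N.erase 2).map (· - 4)).sum + 4*(r+s) + 2 := by
        conv_lhs => rw [hNM]
        rw [Multiset.sum_add, sum_map_add_const, hcM]
        simp only [Multiset.sum_singleton]
      omega
    · rw [← evenCount_map_add 4 rfl, hML]
      omega
    · rw [← oddCount_map_add 4 rfl, hML]
      omega
    · intro a haM
      rcases Multiset.mem_map.1 haM with ⟨b, hb, rfl⟩
      have := hge b hb; omega
    · intro a
      rw [count_rel hML a]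
      exact le_trans (Multiset.count_le_of_le _ (Multiset.erase_le 2 N)) (hg1 (a+4))
    · intro a haM b hbM hab
      have := hg2 _ (hmemN a haM) _ (hmemN b hbM) (by omega)
      omega
    · intro a haM b hbM hae hbe hab
      have hae2 : Even (a+4) := by rw [Nat.even_iff] at hae ⊢; omega
      have hbe2 : Even (b+4) := by rw [Nat.even_iff] at hbe ⊢; omega
      have := hg3 _ (hmemN a haM) _ (hmemN b hbM) hae2 hbe2 (by omega)
      omega

lemma L_G3 (r s m : ℕ) :
    {p : (m + 2*(r+s)).Partition | GS r s p.parts ∧ 1 ∉ p.parts ∧ 2 ∉ p.parts}.ncard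
      = {p : m.Partition | GS r s p.parts}.ncard := by
  refine ncard_shift 2 0 (GS r s) (fun M => GS r s M ∧ 1 ∉ M ∧ 2 ∉ M) m _ ?_ ?_ ?_
  · intro x hx; exact absurd hx (Multiset.notMem_zero x)
  · rintro M hpos hsum ⟨he, ho, h1, hg1, hg2, hg3⟩
    have hcard : Multiset.card M = r + s := by rw [card_eq_even_add_odd, he, ho]
    rw [add_zero]
    refine ⟨?_, ⟨?_, ?_, ?_, ?_, ?_, ?_⟩, ?_, ?_⟩
    · rw [sum_map_add_const, hcard, hsum]
    · rw [evenCount_map_add 2 rfl, he]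
    · rw [oddCount_map_add 2 rfl, ho]
    · intro a haN
      rcases (mem_map_add 2 a M).1 haN with ⟨h2, _⟩
      omega
    · intro a
      rw [count_map_add]
      by_cases h2 : 2 ≤ a
      · have h4 := hg1 (a-2)
        rw [if_pos h2]; omega
      · rw [if_neg h2]; omega
    · intro a haN b hbN hab
      rcases (mem_map_add 2 a M).1 haN with ⟨ha2, haM⟩
      rcases (mem_map_add 2 b M).1 hbN with ⟨hb2, hbM⟩
      have := hg2 _ haM _ hbM (by omega)
      omega
    · intro a haN b hbN hae hbe hab
      rcases (mem_map_add 2 a M).1 haN with ⟨ha2, haM⟩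
      rcases (mem_map_add 2 b M).1 hbN with ⟨hb2, hbM⟩
      have hae2 : Even (a-2) := by rw [Nat.even_iff] at hae ⊢; omega
      have hbe2 : Even (b-2) := by rw [Nat.even_iff] at hbe ⊢; omega
      have := hg3 _ haM _ hbM hae2 hbe2 (by omega)
      omega
    · intro h
      rcases (mem_map_add 2 1 M).1 h with ⟨h2, hmem⟩
      have := hpos _ hmem
      omega
    · intro h
      rcases (mem_map_add 2 2 M).1 h with ⟨h2, hmem⟩
      have := hpos _ hmem
      omega
  · rintro N hpos hsum ⟨⟨he, ho, h1, hg1, hg2, hg3⟩, h1N, h2N⟩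
    have hge : ∀ b ∈ N, 3 ≤ b := by
      intro b hbN
      have hb1 : b ≠ 1 := by rintro rfl; exact h1N hbN
      have hb2 : b ≠ 2 := by rintro rfl; exact h2N hbN
      have := hpos b hbN
      omega
    have hML : (N.map (· - 2)).map (· + 2) = N :=
      map_sub_map_add (fun b hb => by have := hge b hb; omega)
    have hNM : N = (N.map (· - 2)).map (· + 2) + 0 := by
      rw [add_zero]; exact hML.symm
    have hcN : Multiset.card N = r + s := by rw [card_eq_even_add_odd, he, ho]
    have hcM : Multiset.card (N.map (· - 2)) = r + s := by rw [Multiset.card_map, hcN]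
    refine ⟨N.map (· - 2), ?_, ?_, ⟨?_, ?_, ?_, ?_, ?_, ?_⟩, hNM⟩
    · intro x hx
      rcases Multiset.mem_map.1 hx with ⟨b, hb, rfl⟩
      have := hge b hb; omega
    · have hsum2 : N.sum = (N.map (· - 2)).sum + 2*(r+s) := by
        conv_lhs => rw [← hML]
        rw [sum_map_add_const, hcM]
      omega
    · rw [← evenCount_map_add 2 rfl, hML]
      omega
    · rw [← oddCount_map_add 2 rfl, hML]
      omega
    · intro a haM
      rcases Multiset.mem_map.1 haM with ⟨b, hb, rfl⟩
      have := hge b hb; omega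
    · intro a
      rw [count_rel hML a]
      exact hg1 (a+2)
    · intro a haM b hbM hab
      have := hg2 _ (mem_rel hML haM) _ (mem_rel hML hbM) (by omega)
      omega
    · intro a haM b hbM hae hbe hab
      have hae2 : Even (a+2) := by rw [Nat.even_iff] at hae ⊢; omega
      have hbe2 : Even (b+2) := by rw [Nat.even_iff] at hbe ⊢; omega
      have := hg3 _ (mem_rel hML haM) _ (mem_rel hML hbM) hae2 hbe2 (by omega)
      omega

lemma L_Gshift (r s m : ℕ) :
    {p : (m + 2*(r+s)).Partition | GS2 r s p.parts}.ncard
      = {p : m.Partition | GS r s p.parts}.ncard := by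
  refine ncard_shift 2 0 (GS r s) (GS2 r s) m _ ?_ ?_ ?_
  · intro x hx; exact absurd hx (Multiset.notMem_zero x)
  · rintro M hpos hsum ⟨he, ho, h1, hg1, hg2, hg3⟩
    have hcard : Multiset.card M = r + s := by rw [card_eq_even_add_odd, he, ho]
    rw [add_zero]
    refine ⟨?_, ⟨?_, ?_, ?_, ?_, ?_, ?_⟩⟩
    · rw [sum_map_add_const, hcard, hsum]
    · rw [evenCount_map_add 2 rfl, he]
    · rw [oddCount_map_add 2 rfl, ho]
    · intro a haN
      rcases (mem_map_add 2 a M).1 haN with ⟨h2, hmem⟩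
      have := h1 _ hmem
      omega
    · intro a
      rw [count_map_add]
      by_cases h2 : 2 ≤ a
      · have h4 := hg1 (a-2)
        rw [if_pos h2]; omega
      · rw [if_neg h2]; omega
    · intro a haN b hbN hab
      rcases (mem_map_add 2 a M).1 haN with ⟨ha2, haM⟩
      rcases (mem_map_add 2 b M).1 hbN with ⟨hb2, hbM⟩
      have := hg2 _ haM _ hbM (by omega)
      omega
    · intro a haN b hbN hae hbe hab
      rcases (mem_map_add 2 a M).1 haN with ⟨ha2, haM⟩
      rcases (mem_map_add 2 b M).1 hbN with ⟨hb2, hbM⟩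
      have hae2 : Even (a-2) := by rw [Nat.even_iff] at hae ⊢; omega
      have hbe2 : Even (b-2) := by rw [Nat.even_iff] at hbe ⊢; omega
      have := hg3 _ haM _ hbM hae2 hbe2 (by omega)
      omega
  · rintro N hpos hsum ⟨he, ho, h3, hg1, hg2, hg3⟩
    have hML : (N.map (· - 2)).map (· + 2) = N :=
      map_sub_map_add (fun b hb => by have := h3 b hb; omega)
    have hNM : N = (N.map (· - 2)).map (· + 2) + 0 := by
      rw [add_zero]; exact hML.symm
    have hcN : Multiset.card N = r + s := by rw [card_eq_even_add_odd, he, ho]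
    have hcM : Multiset.card (N.map (· - 2)) = r + s := by rw [Multiset.card_map, hcN]
    refine ⟨N.map (· - 2), ?_, ?_, ⟨?_, ?_, ?_, ?_, ?_, ?_⟩, hNM⟩
    · intro x hx
      rcases Multiset.mem_map.1 hx with ⟨b, hb, rfl⟩
      have := h3 b hb; omega
    · have hsum2 : N.sum = (N.map (· - 2)).sum + 2*(r+s) := by
        conv_lhs => rw [← hML]
        rw [sum_map_add_const, hcM]
      omega
    · rw [← evenCount_map_add 2 rfl, hML]
      omega
    · rw [← oddCount_map_add 2 rfl, hML]
      omega
    · intro a haM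
      rcases Multiset.mem_map.1 haM with ⟨b, hb, rfl⟩
      have := h3 b hb; omega
    · intro a
      rw [count_rel hML a]
      exact hg1 (a+2)
    · intro a haM b hbM hab
      have := hg2 _ (mem_rel hML haM) _ (mem_rel hML hbM) (by omega)
      omega
    · intro a haM b hbM hae hbe hab
      have hae2 : Even (a+2) := by rw [Nat.even_iff] at hae ⊢; omega
      have hbe2 : Even (b+2) := by rw [Nat.even_iff] at hbe ⊢; omega
      have := hg3 _ (mem_rel hML haM) _ (mem_rel hML hbM) hae2 hbe2 (by omega)
      omega

lemma parts_card {n : ℕ} {p : n.Partition} {r s : ℕ}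
    (he : evenCount p.parts = r) (ho : oddCount p.parts = s) :
    Multiset.card p.parts = r + s := by
  rw [card_eq_even_add_odd, he, ho]

lemma main1 (n : ℕ) : ∀ r s : ℕ,
    {p : n.Partition | HS r s p.parts}.ncard = {p : n.Partition | GS r s p.parts}.ncard := by
  induction n using Nat.strong_induction_on with
  | _ n IH =>
  intro r s
  rcases Nat.eq_zero_or_pos (r + s) with hrs | hrs
  · -- r = s = 0 : the two sets coincide
    have hr : r = 0 := by omega
    have hs : s = 0 := by omega
    subst hr; subst hs
    have hset : {p : n.Partition | HS 0 0 p.parts} = {p : n.Partition | GS 0 0 p.parts} := by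
      ext p
      simp only [Set.mem_setOf_eq]
      constructor
      · rintro ⟨he, ho, -, -, -⟩
        have hM : p.parts = 0 :=
          Multiset.card_eq_zero.mp (by rw [card_eq_even_add_odd, he, ho])
        refine ⟨he, ho, ?_, ?_, ?_, ?_⟩
        · intro a ha; rw [hM] at ha; exact absurd ha (Multiset.notMem_zero a)
        · intro a; rw [hM]; simp
        · intro a ha; rw [hM] at ha; exact absurd ha (Multiset.notMem_zero a)
        · intro a ha; rw [hM] at ha; exact absurd ha (Multiset.notMem_zero a)
      · rintro ⟨he, ho, -, -⟩
        have hM : p.parts = 0 :=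
          Multiset.card_eq_zero.mp (by rw [card_eq_even_add_odd, he, ho])
        refine ⟨he, ho, ?_, ?_, ?_⟩
        · intro a _; rw [hM]; simp
        · intro a ha; rw [hM] at ha; exact absurd ha (Multiset.notMem_zero a)
        · intro a ha; rw [hM] at ha; exact absurd ha (Multiset.notMem_zero a)
    rw [hset]
  rcases Nat.eq_zero_or_pos n with hn | hn
  · -- n = 0, r + s ≥ 1 : both sides empty
    subst hn
    have hemp : ∀ (q : (0:ℕ).Partition), q.parts = 0 := by
      intro q
      rw [← Multiset.card_eq_zero]
      by_contra hcon
      obtain ⟨a, ha⟩ := Multiset.card_pos_iff_exists_mem.1 (Nat.pos_of_ne_zero hcon)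
      have h1 := q.parts_pos ha
      have h2 := Multiset.single_le_sum (fun x _ => Nat.zero_le x) a ha
      rw [q.parts_sum] at h2
      omega
    have e1 : {p : (0:ℕ).Partition | HS r s p.parts} = ∅ := by
      ext p
      simp only [Set.mem_setOf_eq, Set.mem_empty_iff_false, iff_false]
      rintro ⟨he, ho, -⟩
      have := parts_card he ho
      rw [hemp p] at this
      simp at this
      omega
    have e2 : {p : (0:ℕ).Partition | GS r s p.parts} = ∅ := by
      ext p
      simp only [Set.mem_setOf_eq, Set.mem_empty_iff_false, iff_false]
      rintro ⟨he, ho, -⟩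
      have := parts_card he ho
      rw [hemp p] at this
      simp at this
      omega
    rw [e1, e2]
  -- main case : n ≥ 1, r + s ≥ 1
  have t1 : {p ∈ {q : n.Partition | HS r s q.parts} | 1 ∈ p.parts}.ncard
      = {p ∈ {q : n.Partition | GS r s q.parts} | 1 ∈ p.parts}.ncard := by
    show {p : n.Partition | HS r s p.parts ∧ 1 ∈ p.parts}.ncard
      = {p : n.Partition | GS r s p.parts ∧ 1 ∈ p.parts}.ncard
    rcases s with _ | s'
    · -- s = 0 : both empty
      have e1 : {p : n.Partition | HS r 0 p.parts ∧ 1 ∈ p.parts} = ∅ := by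
        ext p
        simp only [Set.mem_setOf_eq, Set.mem_empty_iff_false, iff_false]
        rintro ⟨⟨-, ho, -⟩, h1⟩
        have := one_le_oddCount h1 odd_one
        omega
      have e2 : {p : n.Partition | GS r 0 p.parts ∧ 1 ∈ p.parts} = ∅ := by
        ext p
        simp only [Set.mem_setOf_eq, Set.mem_empty_iff_false, iff_false]
        rintro ⟨⟨-, ho, -⟩, h1⟩
        have := one_le_oddCount h1 odd_one
        omega
      rw [e1, e2]
    · by_cases hbig : 2*(r+s')+1 ≤ n
      · obtain ⟨m, rfl⟩ : ∃ m, n = m + (2*(r+s')+1) := ⟨n - (2*(r+s')+1), by omega⟩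
        rw [L_H1 r s' m, L_G1 r s' m]
        exact IH m (by omega) r s'
      · have e1 : {p : n.Partition | HS r (s'+1) p.parts ∧ 1 ∈ p.parts} = ∅ := by
          ext p
          simp only [Set.mem_setOf_eq, Set.mem_empty_iff_false, iff_false]
          rintro ⟨⟨he, ho, hd, hme, -⟩, h1⟩
          have hother : ∀ b ∈ p.parts.erase 1, 2 ≤ b := by
            intro b hb
            have hbN : b ∈ p.parts := Multiset.mem_of_mem_erase hb
            have hp := p.parts_pos hbN
            rcases Nat.even_or_odd b with hbe | hbo
            · rw [Nat.even_iff] at hbe; omega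
            · have hb1 : b ≠ 1 := by
                rintro rfl
                have ha := hd 1 odd_one
                have hbb := Multiset.count_erase_self 1 p.parts
                have hcc := Multiset.count_pos.2 hb
                omega
              rw [Nat.odd_iff] at hbo; omega
          have := sum_lb p.parts 1 2 h1 hother
          rw [p.parts_sum, parts_card he ho] at this
          omega
        have e2 : {p : n.Partition | GS r (s'+1) p.parts ∧ 1 ∈ p.parts} = ∅ := by
          ext p
          simp only [Set.mem_setOf_eq, Set.mem_empty_iff_false, iff_false]
          rintro ⟨⟨he, ho, hpos1, hg1, hg2, hg3⟩, h1⟩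
          have hother : ∀ b ∈ p.parts.erase 1, 2 ≤ b := by
            intro b hb
            have hbN : b ∈ p.parts := Multiset.mem_of_mem_erase hb
            have hp := p.parts_pos hbN
            have hb1 : b ≠ 1 := by
              rintro rfl
              have ha := hg1 1
              have hbb := Multiset.count_erase_self 1 p.parts
              have hcc := Multiset.count_pos.2 hb
              omega
            omega
          have := sum_lb p.parts 1 2 h1 hother
          rw [p.parts_sum, parts_card he ho] at this
          omega
        rw [e1, e2]
  have t2 : {p ∈ {q : n.Partition | HS r s q.parts} | 1 ∉ p.parts ∧ 2*(r+s) ∈ p.parts}.ncard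
      = {p ∈ {q : n.Partition | GS r s q.parts} | 1 ∉ p.parts ∧ 2 ∈ p.parts}.ncard := by
    show {p : n.Partition | HS r s p.parts ∧ 1 ∉ p.parts ∧ 2*(r+s) ∈ p.parts}.ncard
      = {p : n.Partition | GS r s p.parts ∧ 1 ∉ p.parts ∧ 2 ∈ p.parts}.ncard
    rcases r with _ | r'
    · have e1 : {p : n.Partition | HS 0 s p.parts ∧ 1 ∉ p.parts ∧ 2*(0+s) ∈ p.parts} = ∅ := by
        ext p
        simp only [Set.mem_setOf_eq, Set.mem_empty_iff_false, iff_false]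
        rintro ⟨⟨he, -⟩, -, hK⟩
        have := one_le_evenCount hK ⟨0+s, by ring⟩
        omega
      have e2 : {p : n.Partition | GS 0 s p.parts ∧ 1 ∉ p.parts ∧ 2 ∈ p.parts} = ∅ := by
        ext p
        simp only [Set.mem_setOf_eq, Set.mem_empty_iff_false, iff_false]
        rintro ⟨⟨he, -⟩, -, hK⟩
        have := one_le_evenCount hK ⟨1, by norm_num⟩
        omega
      rw [e1, e2]
    · by_cases hbig : 4*(r'+s)+2 ≤ n
      · obtain ⟨m, rfl⟩ : ∃ m, n = m + (4*(r'+s)+2) := ⟨n - (4*(r'+s)+2), by omega⟩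
        rw [L_H2 r' s m, L_G2 r' s m]
        exact IH m (by omega) r' s
      · have e1 : {p : n.Partition | HS (r'+1) s p.parts ∧ 1 ∉ p.parts ∧ 2*(r'+1+s) ∈ p.parts} = ∅ := by
          ext p
          simp only [Set.mem_setOf_eq, Set.mem_empty_iff_false, iff_false]
          rintro ⟨⟨he, ho, hd, hme, -⟩, h1, hK⟩
          have hother : ∀ b ∈ p.parts.erase (2*(r'+1+s)), 2 ≤ b := by
            intro b hb
            have hbN : b ∈ p.parts := Multiset.mem_of_mem_erase hb
            have hp := p.parts_pos hbN
            rcases Nat.even_or_odd b with hbe | hbo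
            · rw [Nat.even_iff] at hbe; omega
            · have hb1 : b ≠ 1 := by rintro rfl; exact h1 hbN
              rw [Nat.odd_iff] at hbo; omega
          have := sum_lb p.parts (2*(r'+1+s)) 2 hK hother
          rw [p.parts_sum, parts_card he ho] at this
          omega
        have e2 : {p : n.Partition | GS (r'+1) s p.parts ∧ 1 ∉ p.parts ∧ 2 ∈ p.parts} = ∅ := by
          ext p
          simp only [Set.mem_setOf_eq, Set.mem_empty_iff_false, iff_false]
          rintro ⟨⟨he, ho, hpos1, hg1, hg2, hg3⟩, h1, hK⟩
          have hother : ∀ b ∈ p.parts.erase 2, 4 ≤ b := by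
            intro b hb
            have hbN : b ∈ p.parts := Multiset.mem_of_mem_erase hb
            have hp := p.parts_pos hbN
            have hb2 : b ≠ 2 := by
              rintro rfl
              have ha := hg1 2
              have hbb := Multiset.count_erase_self 2 p.parts
              have hcc := Multiset.count_pos.2 hb
              omega
            have hb1 : b ≠ 1 := by rintro rfl; exact h1 hbN
            have := hg2 2 hK b hbN (by omega)
            omega
          have := sum_lb p.parts 2 4 hK hother
          rw [p.parts_sum, parts_card he ho] at this
          omega
        rw [e1, e2]
  have t3 : {p ∈ {q : n.Partition | HS r s q.parts} | 1 ∉ p.parts ∧ 2*(r+s) ∉ p.parts}.ncard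
      = {p ∈ {q : n.Partition | GS r s q.parts} | 1 ∉ p.parts ∧ 2 ∉ p.parts}.ncard := by
    show {p : n.Partition | HS r s p.parts ∧ 1 ∉ p.parts ∧ 2*(r+s) ∉ p.parts}.ncard
      = {p : n.Partition | GS r s p.parts ∧ 1 ∉ p.parts ∧ 2 ∉ p.parts}.ncard
    by_cases hbig : 2*(r+s) ≤ n
    · obtain ⟨m, rfl⟩ : ∃ m, n = m + 2*(r+s) := ⟨n - 2*(r+s), by omega⟩
      rw [L_H3 r s m, L_G3 r s m]
      exact IH m (by omega) r s
    · have e1 : {p : n.Partition | HS r s p.parts ∧ 1 ∉ p.parts ∧ 2*(r+s) ∉ p.parts} = ∅ := by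
        ext p
        simp only [Set.mem_setOf_eq, Set.mem_empty_iff_false, iff_false]
        rintro ⟨⟨he, ho, hd, hme, -⟩, h1, -⟩
        have hall : ∀ b ∈ p.parts, 2 ≤ b := by
          intro b hbN
          have hp := p.parts_pos hbN
          rcases Nat.even_or_odd b with hbe | hbo
          · rw [Nat.even_iff] at hbe; omega
          · have hb1 : b ≠ 1 := by rintro rfl; exact h1 hbN
            rw [Nat.odd_iff] at hbo; omega
        have := Multiset.card_nsmul_le_sum hall
        rw [p.parts_sum, parts_card he ho] at this
        simp only [smul_eq_mul] at this
        omega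
      have e2 : {p : n.Partition | GS r s p.parts ∧ 1 ∉ p.parts ∧ 2 ∉ p.parts} = ∅ := by
        ext p
        simp only [Set.mem_setOf_eq, Set.mem_empty_iff_false, iff_false]
        rintro ⟨⟨he, ho, -⟩, h1, h2⟩
        have hall : ∀ b ∈ p.parts, 2 ≤ b := by
          intro b hbN
          have hp := p.parts_pos hbN
          have hb1 : b ≠ 1 := by rintro rfl; exact h1 hbN
          omega
        have := Multiset.card_nsmul_le_sum hall
        rw [p.parts_sum, parts_card he ho] at this
        simp only [smul_eq_mul] at this
        omega
      rw [e1, e2]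
  rw [ncard_split3 {p : n.Partition | HS r s p.parts} (2*(r+s)),
    ncard_split3 {p : n.Partition | GS r s p.parts} 2, t1, t2, t3]

lemma Hcount1_eq (r s n : ℕ) : Hcount 1 r s n = {p : n.Partition | HS r s p.parts}.ncard := by
  unfold Hcount
  congr 1

lemma Hcount2_eq (r s n : ℕ) : Hcount 2 r s n = {p : n.Partition | HS2 r s p.parts}.ncard := by
  unfold Hcount
  congr 1

lemma Gcount1_eq (r s n : ℕ) : Gcount 1 r s n = {p : n.Partition | GS r s p.parts}.ncard := by
  unfold Gcount
  congr 1

lemma Gcount2_eq (r s n : ℕ) : Gcount 2 r s n = {p : n.Partition | GS2 r s p.parts}.ncard := by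
  unfold Gcount
  congr 1

theorem H_eq_G (i r s n : ℕ) (hi : i = 1 ∨ i = 2) :
    Hcount i r s n = Gcount i r s n := by
  rcases hi with rfl | rfl
  · rw [Hcount1_eq, Gcount1_eq]
    exact main1 n r s
  · by_cases h : 2*(r+s) ≤ n
    · obtain ⟨m, rfl⟩ : ∃ m, n = m + 2*(r+s) := ⟨n - 2*(r+s), by omega⟩
      rw [Hcount2_eq, Gcount2_eq, L_Hshift, L_Gshift]
      exact main1 m r s
    · rw [Hcount2_eq, Gcount2_eq]
      have e1 : {p : n.Partition | HS2 r s p.parts} = ∅ := by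
        ext p
        simp only [Set.mem_setOf_eq, Set.mem_empty_iff_false, iff_false]
        rintro ⟨he, ho, hd, hme, hmo⟩
        have hall : ∀ b ∈ p.parts, 2 ≤ b := by
          intro b hbN
          have hp := p.parts_pos hbN
          rcases Nat.even_or_odd b with hbe | hbo
          · rw [Nat.even_iff] at hbe; omega
          · have := hmo b hbN hbo; omega
        have := Multiset.card_nsmul_le_sum hall
        rw [p.parts_sum, parts_card he ho] at this
        simp only [smul_eq_mul] at this
        omega
      have e2 : {p : n.Partition | GS2 r s p.parts} = ∅ := by
        ext p
        simp only [Set.mem_setOf_eq, Set.mem_empty_iff_false, iff_false]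
        rintro ⟨he, ho, h3, -⟩
        have hall : ∀ b ∈ p.parts, 2 ≤ b := fun b hb => by have := h3 b hb; omega
        have := Multiset.card_nsmul_le_sum hall
        rw [p.parts_sum, parts_card he ho] at this
        simp only [smul_eq_mul] at this
        omega
      rw [e1, e2]
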